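/- Let ν > 0 and 0 ≤ γ₁ < γ₂ with √γ₂ − √γ₁ ≤ ν and 3γ₁ + γ₂ ≤ ν². Set κ = ν/2 − (1/2)√(ν² − 4γ₁), p₁₂ = ν/2 + (τ/2)√(ν² − 3γ₁ − γ₂) and p₂₂ = (1/2)(ν² − 2γ₁ + τν√(ν² − 3γ₁ − γ₂)) for any τ ∈ [−1,1]. Then P = [[1,p₁₂],[p₁₂,p₂₂]] is symmetric positive definite and Q_γ P + P Q_γᵀ − 2κ P is positive semi-definite for all γ ∈ [γ₁, γ₂], where Q_γ = [[0,1],[−γ,ν]]. -/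

import Mathlib

open Matrix

lemma aux_psd2 (a b c : ℝ) (ha : 0 < a) (h : b ^ 2 ≤ a * c) :
    (!![a, b; b, c] : Matrix (Fin 2) (Fin 2) ℝ).PosSemidef := by
  rw [Matrix.posSemidef_iff_dotProduct_mulVec]
  constructor
  · ext i j
    fin_cases i <;> fin_cases j <;> rfl
  · intro x
    have h0 : star x = x := by ext i; simp
    rw [h0]
    have : dotProduct x ((!![a, b; b, c] : Matrix (Fin 2) (Fin 2) ℝ) *ᵥ x)
        = a * x 0 ^ 2 + 2 * b * (x 0 * x 1) + c * x 1 ^ 2 := by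
      simp [dotProduct, Matrix.mulVec, Fin.sum_univ_two]
      ring
    rw [this]
    nlinarith [sq_nonneg (a * x 0 + b * x 1), sq_nonneg (x 1), mul_nonneg (sub_nonneg.2 h) (sq_nonneg (x 1))]

lemma aux_pd2 (a b c : ℝ) (ha : 0 < a) (h : b ^ 2 < a * c) :
    (!![a, b; b, c] : Matrix (Fin 2) (Fin 2) ℝ).PosDef := by
  rw [Matrix.posDef_iff_dotProduct_mulVec]
  constructor
  · ext i j
    fin_cases i <;> fin_cases j <;> rfl
  · intro x hx
    have h0 : star x = x := by ext i; simp
    rw [h0]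
    have hq : dotProduct x ((!![a, b; b, c] : Matrix (Fin 2) (Fin 2) ℝ) *ᵥ x)
        = a * x 0 ^ 2 + 2 * b * (x 0 * x 1) + c * x 1 ^ 2 := by
      simp [dotProduct, Matrix.mulVec, Fin.sum_univ_two]
      ring
    rw [hq]
    rcases eq_or_ne (x 1) 0 with h1 | h1
    · have h00 : x 0 ≠ 0 := by
        intro h00; apply hx; ext i; fin_cases i <;> simp [h00, h1]
      rw [h1]
      nlinarith [mul_pos ha (sq_pos_of_ne_zero h00)]
    · nlinarith [sq_nonneg (a * x 0 + b * x 1), sq_pos_of_ne_zero h1]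

set_option maxHeartbeats 1000000 in
/-- explicit admissible matrices in the case `3γ₁ + γ₂ ≤ ν²`. -/
theorem stmt10 (ν γ₁ γ₂ τ : ℝ) (hν : 0 < ν) (hγ₁ : 0 ≤ γ₁) (hγ : γ₁ < γ₂)
    (hres : Real.sqrt γ₂ - Real.sqrt γ₁ ≤ ν) (hcone : 3 * γ₁ + γ₂ ≤ ν ^ 2)
    (hτ : τ ∈ Set.Icc (-1 : ℝ) 1) :
    let κ : ℝ := ν / 2 - Real.sqrt (ν ^ 2 - 4 * γ₁) / 2
    let p12 : ℝ := ν / 2 + (τ / 2) * Real.sqrt (ν ^ 2 - 3 * γ₁ - γ₂)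
    let p22 : ℝ := (1 / 2) * (ν ^ 2 - 2 * γ₁ + τ * ν * Real.sqrt (ν ^ 2 - 3 * γ₁ - γ₂))
    (!![1, p12; p12, p22] : Matrix (Fin 2) (Fin 2) ℝ).PosDef ∧
    ∀ γ ∈ Set.Icc γ₁ γ₂,
      ((!![0, 1; -γ, ν] : Matrix (Fin 2) (Fin 2) ℝ) * !![1, p12; p12, p22]
        + !![1, p12; p12, p22] * (!![0, 1; -γ, ν] : Matrix (Fin 2) (Fin 2) ℝ)ᵀ
        - (2 * κ) • !![1, p12; p12, p22]).PosSemidef := by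
  obtain ⟨hτ1, hτ2⟩ := hτ
  intro κ p12 p22
  set s : ℝ := Real.sqrt (ν ^ 2 - 3 * γ₁ - γ₂) with hsdef
  set r : ℝ := Real.sqrt (ν ^ 2 - 4 * γ₁) with hrdef
  have hτsq : τ ^ 2 ≤ 1 := by nlinarith
  have hs0 : 0 ≤ s := Real.sqrt_nonneg _
  have hr0 : 0 ≤ r := Real.sqrt_nonneg _
  have hs2 : s ^ 2 = ν ^ 2 - 3 * γ₁ - γ₂ := Real.sq_sqrt (by linarith)
  have hr2 : r ^ 2 = ν ^ 2 - 4 * γ₁ := Real.sq_sqrt (by linarith)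
  have hsr : s < r := by nlinarith
  have hκ : κ = ν / 2 - r / 2 := rfl
  have hp12 : p12 = ν / 2 + τ / 2 * s := rfl
  have hp22 : p22 = 1 / 2 * (ν ^ 2 - 2 * γ₁ + τ * ν * s) := rfl
  have hts : τ ^ 2 * s ^ 2 ≤ s ^ 2 := by nlinarith [sq_nonneg s]
  constructor
  · refine aux_pd2 _ _ _ one_pos ?_
    rw [hp12, hp22]
    nlinarith [hs2, hts]
  · intro γ hγm
    obtain ⟨hγl, hγr⟩ := hγm
    have hM : (!![0, 1; -γ, ν] : Matrix (Fin 2) (Fin 2) ℝ) * !![1, p12; p12, p22]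
        + !![1, p12; p12, p22] * (!![0, 1; -γ, ν] : Matrix (Fin 2) (Fin 2) ℝ)ᵀ
        - (2 * κ) • !![1, p12; p12, p22]
        = !![2 * p12 - 2 * κ, p22 - γ + ν * p12 - 2 * κ * p12;
             p22 - γ + ν * p12 - 2 * κ * p12,
             2 * ν * p22 - 2 * γ * p12 - 2 * κ * p22] := by
      have hQT : (!![0, 1; -γ, ν] : Matrix (Fin 2) (Fin 2) ℝ)ᵀ = !![0, -γ; 1, ν] := by
        ext i j; fin_cases i <;> fin_cases j <;> rfl
      rw [hQT]
      ext i j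
      fin_cases i <;> fin_cases j <;>
        (simp [Matrix.mul_apply, Fin.sum_univ_two, Matrix.vecHead, Matrix.vecTail]; try ring)
    rw [hM]
    refine aux_psd2 _ _ _ ?_ ?_
    · rw [hp12, hκ]
      nlinarith [mul_nonneg (by linarith : (0:ℝ) ≤ 1 + τ) hs0]
    · rw [hp12, hp22, hκ]
      have hkey : 0 ≤ (γ - γ₁) * (r ^ 2 - τ ^ 2 * s ^ 2 - (γ - γ₁)) := by
        apply mul_nonneg (by linarith)
        nlinarith [hs2, hr2, hts]
      have hid : (2 * (ν / 2 + τ / 2 * s) - 2 * (ν / 2 - r / 2))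
            * (2 * ν * (1 / 2 * (ν ^ 2 - 2 * γ₁ + τ * ν * s))
               - 2 * γ * (ν / 2 + τ / 2 * s)
               - 2 * (ν / 2 - r / 2) * (1 / 2 * (ν ^ 2 - 2 * γ₁ + τ * ν * s)))
          - (1 / 2 * (ν ^ 2 - 2 * γ₁ + τ * ν * s) - γ + ν * (ν / 2 + τ / 2 * s)
               - 2 * (ν / 2 - r / 2) * (ν / 2 + τ / 2 * s)) ^ 2
          = (γ - γ₁) * (r ^ 2 - τ ^ 2 * s ^ 2 - (γ - γ₁)) := by
        linear_combination (ν ^ 2 / 4 - τ ^ 2 * s ^ 2 / 4 - γ) * hr2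
      linarith [hid, hkey]
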